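/- For every ε > 0, the Szlenk derivation map s_ε : K(B_{ℓ∞}) → K(B_{ℓ∞}), F ↦ F'_ε, is Σ⁰₃-measurable: the preimage of every open set is a countable union of countable intersections of open sets. -/

import Mathlib

open Topology

/-- The closed unit ball of `ℓ∞` with its weak* topology, realized as the set of sequences
bounded by `1` with the topology of pointwise (coordinatewise) convergence. -/
def BallInfty : Type := {a : ℕ → ℝ // ∀ n, |a n| ≤ 1}

instance : TopologicalSpace BallInfty := instTopologicalSpaceSubtype

/-- The diameter of a subset of the ball of `ℓ∞`, measured in the `ℓ∞` norm. -/
noncomputable def linftyDiam (S : Set BallInfty) : ℝ :=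
  sSup {d : ℝ | ∃ a ∈ S, ∃ b ∈ S, d = ⨆ n, |a.1 n - b.1 n|}

/-- The Vietoris topology on subsets of a topological space. -/
def vietoris (α : Type*) [TopologicalSpace α] : TopologicalSpace (Set α) :=
  TopologicalSpace.generateFrom
    ({S | ∃ U : Set α, IsOpen U ∧ S = {K | K ⊆ U}} ∪
     {S | ∃ U : Set α, IsOpen U ∧ S = {K | (K ∩ U).Nonempty}})

/-- The hyperspace `K(B_{ℓ∞})` of compact subsets with the Vietoris topology. -/
def KB : Type := {F : Set BallInfty // IsCompact F}

instance : TopologicalSpace KB :=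
  TopologicalSpace.induced Subtype.val (vietoris BallInfty)

/-- The Szlenk derivative `F'_ε` of a subset of the ball of `ℓ∞`. -/
def szlenkD (ε : ℝ) (F : Set BallInfty) : Set BallInfty :=
  {x ∈ F | ∀ U : Set BallInfty, IsOpen U → x ∈ U → ε ≤ linftyDiam (U ∩ F)}

namespace Aux14

lemma ballInfty_embedding : Topology.IsEmbedding (Subtype.val : BallInfty → (ℕ → ℝ)) :=
  ⟨⟨rfl⟩, Subtype.val_injective⟩
instance : TopologicalSpace.MetrizableSpace BallInfty := ballInfty_embedding.metrizableSpace
instance : SecondCountableTopology BallInfty :=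
  ballInfty_embedding.toIsInducing.secondCountableTopology
instance : T2Space BallInfty := ballInfty_embedding.t2Space
noncomputable instance : MetricSpace BallInfty := TopologicalSpace.metrizableSpaceMetric BallInfty



lemma coord_le (a b : BallInfty) (n : ℕ) : |a.1 n - b.1 n| ≤ 2 := by
  have := a.2 n; have := b.2 n
  have h := abs_sub (a.1 n) (b.1 n)
  calc |a.1 n - b.1 n| ≤ |a.1 n| + |b.1 n| := abs_sub _ _
    _ ≤ 2 := by linarith

lemma coordSup_bdd (a b : BallInfty) : BddAbove (Set.range fun n => |a.1 n - b.1 n|) :=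
  ⟨2, by rintro x ⟨n, rfl⟩; exact coord_le a b n⟩

lemma le_coordSup (a b : BallInfty) (n : ℕ) : |a.1 n - b.1 n| ≤ ⨆ n, |a.1 n - b.1 n| :=
  le_ciSup (coordSup_bdd a b) n

lemma coordSup_nonneg (a b : BallInfty) : 0 ≤ ⨆ n, |a.1 n - b.1 n| :=
  le_trans (abs_nonneg _) (le_coordSup a b 0)

lemma coordSup_le {a b : BallInfty} {d : ℝ} (h : ∀ n, |a.1 n - b.1 n| ≤ d) :
    (⨆ n, |a.1 n - b.1 n|) ≤ d := ciSup_le h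

lemma diamSet_bdd (S : Set BallInfty) :
    BddAbove {d : ℝ | ∃ a ∈ S, ∃ b ∈ S, d = ⨆ n, |a.1 n - b.1 n|} := by
  refine ⟨2, ?_⟩
  rintro x ⟨a, ha, b, hb, rfl⟩
  exact coordSup_le (fun n => coord_le a b n)

lemma linftyDiam_nonneg (S : Set BallInfty) : 0 ≤ linftyDiam S := by
  apply Real.sSup_nonneg
  rintro x ⟨a, ha, b, hb, rfl⟩
  exact coordSup_nonneg a b

lemma linftyDiam_mono {S T : Set BallInfty} (h : S ⊆ T) : linftyDiam S ≤ linftyDiam T := by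
  rcases Set.eq_empty_or_nonempty {d : ℝ | ∃ a ∈ S, ∃ b ∈ S, d = ⨆ n, |a.1 n - b.1 n|} with he | hne
  · unfold linftyDiam; rw [he, Real.sSup_empty]; exact linftyDiam_nonneg T
  · exact csSup_le_csSup (diamSet_bdd T) hne (by rintro x ⟨a, ha, b, hb, rfl⟩; exact ⟨a, h ha, b, h hb, rfl⟩)

lemma linftyDiam_le_iff {S : Set BallInfty} {δ : ℝ} (hδ : 0 ≤ δ) :
    linftyDiam S ≤ δ ↔ ∀ a ∈ S, ∀ b ∈ S, ∀ n, |a.1 n - b.1 n| ≤ δ := by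
  constructor
  · intro h a ha b hb n
    exact le_trans (le_trans (le_coordSup a b n)
      (le_csSup (diamSet_bdd S) ⟨a, ha, b, hb, rfl⟩)) h
  · intro h
    apply Real.sSup_le _ hδ
    rintro x ⟨a, ha, b, hb, rfl⟩
    exact coordSup_le (h a ha b hb)

lemma not_linftyDiam_le_iff {S : Set BallInfty} {δ : ℝ} (hδ : 0 ≤ δ) :
    ¬ linftyDiam S ≤ δ ↔ ∃ n : ℕ, ∃ q : ℚ,
      (∃ a ∈ S, a.1 n < (q : ℝ)) ∧ (∃ b ∈ S, (q : ℝ) + δ < b.1 n) := by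
  rw [linftyDiam_le_iff hδ]
  push_neg
  constructor
  · rintro ⟨a, ha, b, hb, n, hn⟩
    rcases le_or_gt (a.1 n) (b.1 n) with hc | hc
    · -- |a-b| = b-a > δ
      have habs : |a.1 n - b.1 n| = b.1 n - a.1 n := by
        rw [abs_sub_comm, abs_of_nonneg (by linarith)]
      rw [habs] at hn
      obtain ⟨q, hq1, hq2⟩ := exists_rat_btwn (show a.1 n < b.1 n - δ by linarith)
      exact ⟨n, q, ⟨a, ha, hq1⟩, ⟨b, hb, by linarith⟩⟩
    · have habs : |a.1 n - b.1 n| = a.1 n - b.1 n := abs_of_nonneg (by linarith)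
      rw [habs] at hn
      obtain ⟨q, hq1, hq2⟩ := exists_rat_btwn (show b.1 n < a.1 n - δ by linarith)
      exact ⟨n, q, ⟨b, hb, hq1⟩, ⟨a, ha, by linarith⟩⟩
  · rintro ⟨n, q, ⟨a, ha, hq⟩, ⟨b, hb, hqb⟩⟩
    refine ⟨b, hb, a, ha, n, ?_⟩
    have : δ < b.1 n - a.1 n := by linarith
    exact lt_of_lt_of_le this (le_abs_self _)

lemma isOpen_KB_sub {V : Set BallInfty} (hV : IsOpen V) : IsOpen {F : KB | F.1 ⊆ V} := by
  refine (@isOpen_induced_iff _ _ (vietoris BallInfty) _ Subtype.val).2 ⟨{K | K ⊆ V}, ?_, rfl⟩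
  exact TopologicalSpace.GenerateOpen.basic _ (Or.inl ⟨V, hV, rfl⟩)

lemma isOpen_KB_hits {V : Set BallInfty} (hV : IsOpen V) :
    IsOpen {F : KB | (F.1 ∩ V).Nonempty} := by
  refine (@isOpen_induced_iff _ _ (vietoris BallInfty) _ Subtype.val).2
    ⟨{K | (K ∩ V).Nonempty}, ?_, rfl⟩
  exact TopologicalSpace.GenerateOpen.basic _ (Or.inr ⟨V, hV, rfl⟩)

/-- Gδ sets in KB, as countable intersections of ℕ-indexed open families. -/
def IsGd (S : Set KB) : Prop :=
  ∃ V : ℕ → Set KB, (∀ m, IsOpen (V m)) ∧ S = ⋂ m, V m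

def IsS3 (S : Set KB) : Prop :=
  ∃ V : ℕ → ℕ → Set KB, (∀ n m, IsOpen (V n m)) ∧ S = ⋃ n, ⋂ m, V n m

lemma IsGd.of_isOpen {S : Set KB} (h : IsOpen S) : IsGd S :=
  ⟨fun _ => S, fun _ => h, (Set.iInter_const S).symm⟩

lemma isGd_iInter {ι : Type*} [Countable ι] {S : ι → Set KB} (h : ∀ i, IsGd (S i)) :
    IsGd (⋂ i, S i) := by
  choose V hVo hVe using h
  obtain ⟨g, hg⟩ := Countable.exists_injective_nat ι
  classical
  set W : ℕ → Set KB := fun k =>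
    if h : ∃ i, g i = (Nat.unpair k).1 then V h.choose (Nat.unpair k).2 else Set.univ with hW
  have hWo : ∀ k, IsOpen (W k) := by
    intro k; rw [hW]; dsimp only
    split
    · exact hVo _ _
    · exact isOpen_univ
  refine ⟨W, hWo, ?_⟩
  have hWsub : ∀ k, (⋂ i, S i) ⊆ W k := by
    intro k
    rw [hW]; dsimp only
    split
    · next h =>
      refine Set.Subset.trans (Set.iInter_subset _ h.choose) ?_
      rw [hVe h.choose]
      exact Set.iInter_subset _ _
    · exact Set.subset_univ _
  apply Set.Subset.antisymm
  · exact Set.subset_iInter hWsub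
  · intro x hx
    refine Set.mem_iInter.2 fun i => ?_
    rw [hVe i]
    refine Set.mem_iInter.2 fun m => ?_
    have hx' := Set.mem_iInter.1 hx (Nat.pair (g i) m)
    have hex : ∃ j, g j = (Nat.unpair (Nat.pair (g i) m)).1 := ⟨i, by simp⟩
    rw [hW] at hx'; dsimp only at hx'
    rw [dif_pos hex] at hx'
    have hic : hex.choose = i := hg (hex.choose_spec.trans (by simp))
    rw [hic] at hx'
    simpa using hx'

lemma isGd_union {S T : Set KB} (hS : IsGd S) (hT : IsGd T) : IsGd (S ∪ T) := by
  obtain ⟨U, hUo, rfl⟩ := hS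
  obtain ⟨V, hVo, rfl⟩ := hT
  refine ⟨fun k => U (Nat.unpair k).1 ∪ V (Nat.unpair k).2,
    fun k => (hUo _).union (hVo _), ?_⟩
  ext x
  simp only [Set.mem_union, Set.mem_iInter]
  constructor
  · rintro (h | h) k
    · exact Or.inl (h _)
    · exact Or.inr (h _)
  · intro h
    by_cases hx : ∀ n, x ∈ U n
    · exact Or.inl hx
    · push_neg at hx
      obtain ⟨n, hn⟩ := hx
      refine Or.inr fun m => ?_
      rcases h (Nat.pair n m) with h' | h'
      · simp only [Nat.unpair_pair] at h'; exact absurd h' hn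
      · simpa using h'

lemma isGd_inter {S T : Set KB} (hS : IsGd S) (hT : IsGd T) : IsGd (S ∩ T) := by
  have : S ∩ T = ⋂ b : Bool, (if b then S else T) := by
    ext x; simp [Set.mem_iInter, Bool.forall_bool, and_comm]
  rw [this]
  exact isGd_iInter (fun b => by cases b <;> simp [hS, hT])

lemma IsS3.of_isGd {S : Set KB} (h : IsGd S) : IsS3 S := by
  obtain ⟨V, hVo, rfl⟩ := h
  exact ⟨fun _ => V, fun _ => hVo, by rw [Set.iUnion_const]⟩

lemma IsS3.of_isOpen {S : Set KB} (h : IsOpen S) : IsS3 S := .of_isGd (.of_isOpen h)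

lemma isS3_empty : IsS3 (∅ : Set KB) := .of_isOpen isOpen_empty

lemma isS3_iUnion {ι : Type*} [Countable ι] {S : ι → Set KB} (h : ∀ i, IsS3 (S i)) :
    IsS3 (⋃ i, S i) := by
  choose V hVo hVe using h
  obtain ⟨g, hg⟩ := Countable.exists_injective_nat ι
  classical
  set W : ℕ → ℕ → Set KB := fun k m =>
    if h : ∃ i, g i = (Nat.unpair k).1 then V h.choose (Nat.unpair k).2 m else ∅ with hW
  have hWo : ∀ k m, IsOpen (W k m) := by
    intro k m; rw [hW]; dsimp only
    split
    · exact hVo _ _ _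
    · exact isOpen_empty
  refine ⟨W, hWo, ?_⟩
  apply Set.Subset.antisymm
  · rintro x hx
    obtain ⟨i, hi⟩ := Set.mem_iUnion.1 hx
    rw [hVe i] at hi
    obtain ⟨n, hn⟩ := Set.mem_iUnion.1 hi
    refine Set.mem_iUnion.2 ⟨Nat.pair (g i) n, Set.mem_iInter.2 fun m => ?_⟩
    have hex : ∃ j, g j = (Nat.unpair (Nat.pair (g i) n)).1 := ⟨i, by simp⟩
    rw [hW]; dsimp only
    rw [dif_pos hex]
    have hic : hex.choose = i := hg (hex.choose_spec.trans (by simp))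
    rw [hic]
    simpa using Set.mem_iInter.1 hn m
  · rintro x hx
    obtain ⟨k, hk⟩ := Set.mem_iUnion.1 hx
    by_cases hex : ∃ i, g i = (Nat.unpair k).1
    · refine Set.mem_iUnion.2 ⟨hex.choose, ?_⟩
      rw [hVe hex.choose]
      refine Set.mem_iUnion.2 ⟨(Nat.unpair k).2, Set.mem_iInter.2 fun m => ?_⟩
      have := Set.mem_iInter.1 hk m
      rw [hW] at this; dsimp only at this
      rwa [dif_pos hex] at this
    · have := Set.mem_iInter.1 hk 0
      rw [hW] at this; dsimp only at this
      rw [dif_neg hex] at this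
      exact absurd this (Set.notMem_empty x)

lemma isS3_inter {S T : Set KB} (hS : IsS3 S) (hT : IsS3 T) : IsS3 (S ∩ T) := by
  obtain ⟨U, hUo, hUe⟩ := hS
  obtain ⟨V, hVo, hVe⟩ := hT
  have key : S ∩ T = ⋃ (p : ℕ × ℕ), ((⋂ m, U p.1 m) ∩ ⋂ m, V p.2 m) := by
    rw [hUe, hVe]
    ext x
    simp only [Set.mem_inter_iff, Set.mem_iUnion]
    exact ⟨fun ⟨⟨n, hn⟩, ⟨k, hk⟩⟩ => ⟨⟨n, k⟩, hn, hk⟩, fun ⟨p, h1, h2⟩ => ⟨⟨p.1, h1⟩, ⟨p.2, h2⟩⟩⟩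
  rw [key]
  exact isS3_iUnion fun p => .of_isGd (isGd_inter ⟨_, hUo p.1, rfl⟩ ⟨_, hVo p.2, rfl⟩)

lemma isS3_sInter_finite {𝒮 : Set (Set KB)} (h𝒮 : 𝒮.Finite) (h : ∀ S ∈ 𝒮, IsS3 S) :
    IsS3 (⋂₀ 𝒮) := by
  refine Set.Finite.induction_on (motive := fun 𝒮 _ => (∀ S ∈ 𝒮, IsS3 S) → IsS3 (⋂₀ 𝒮)) 𝒮 h𝒮
    (fun _ => by simpa using IsS3.of_isOpen isOpen_univ) ?_ h
  intro a s _ _ ih h'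
  rw [Set.sInter_insert]
  exact isS3_inter (h' _ (Set.mem_insert _ _)) (ih fun S hS => h' S (Set.mem_insert_of_mem _ hS))


section C

lemma isGd_KB_subClosed {C : Set BallInfty} (hC : IsClosed C) : IsGd {F : KB | F.1 ⊆ C} := by
  refine ⟨fun n => {F : KB | F.1 ⊆ Metric.thickening (1/(n+1) : ℝ) C},
    fun n => isOpen_KB_sub Metric.isOpen_thickening, ?_⟩
  ext F
  simp only [Set.mem_setOf_eq, Set.mem_iInter]
  constructor
  · intro h n
    exact h.trans (Metric.self_subset_thickening (by positivity) C)
  · intro h x hx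
    have hmem : x ∈ ⋂ (δ : ℝ) (_ : 0 < δ), Metric.thickening δ C := by
      refine Set.mem_iInter.2 fun δ => Set.mem_iInter.2 fun hδ => ?_
      obtain ⟨n, hn⟩ := exists_nat_one_div_lt hδ
      exact Metric.thickening_mono hn.le C (h n hx)
    rw [← Metric.closure_eq_iInter_thickening C] at hmem
    rwa [hC.closure_eq] at hmem

lemma isGd_KB_hitsClosed {C : Set BallInfty} (hC : IsClosed C) :
    IsGd {F : KB | (F.1 ∩ C).Nonempty} := by
  refine ⟨fun n => {F : KB | (F.1 ∩ Metric.thickening (1/(n+1) : ℝ) C).Nonempty},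
    fun n => isOpen_KB_hits Metric.isOpen_thickening, ?_⟩
  ext F
  simp only [Set.mem_setOf_eq, Set.mem_iInter]
  constructor
  · intro h n
    exact h.mono (Set.inter_subset_inter_right _ (Metric.self_subset_thickening (by positivity) C))
  · intro h
    set K : ℕ → Set BallInfty := fun n => F.1 ∩ Metric.cthickening (1/(n+1) : ℝ) C with hK
    have hKsub : ∀ n, K (n+1) ⊆ K n := by
      intro n
      exact Set.inter_subset_inter_right _ (Metric.cthickening_mono
        (by apply div_le_div_of_nonneg_left <;> norm_num <;> linarith) C)
    have hKne : ∀ n, (K n).Nonempty := fun n =>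
      (h n).mono (Set.inter_subset_inter_right _ (Metric.thickening_subset_cthickening _ C))
    have hKcl : ∀ n, IsClosed (K n) := fun n =>
      (F.2.isClosed).inter Metric.isClosed_cthickening
    have hKco : IsCompact (K 0) := F.2.inter_right Metric.isClosed_cthickening
    have hne := IsCompact.nonempty_iInter_of_sequence_nonempty_isCompact_isClosed K hKsub hKne hKco hKcl
    have : (⋂ n, K n) ⊆ F.1 ∩ C := by
      intro x hx
      have hxF : x ∈ F.1 := (Set.mem_iInter.1 hx 0).1
      have hxC : x ∈ ⋂ (δ : ℝ) (_ : 0 < δ), Metric.cthickening δ C := by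
        refine Set.mem_iInter.2 fun δ => Set.mem_iInter.2 fun hδ => ?_
        obtain ⟨n, hn⟩ := exists_nat_one_div_lt hδ
        exact Metric.cthickening_mono hn.le C (Set.mem_iInter.1 hx n).2
      rw [← Metric.closure_eq_iInter_cthickening C, hC.closure_eq] at hxC
      exact ⟨hxF, hxC⟩
    exact hne.mono this

lemma coordOpen (n : ℕ) (q : ℝ) : IsOpen {x : BallInfty | x.1 n < q} := by
  have : Continuous fun x : BallInfty => x.1 n :=
    (continuous_apply n).comp continuous_subtype_val
  exact isOpen_lt this continuous_const

lemma coordOpen' (n : ℕ) (q : ℝ) : IsOpen {x : BallInfty | q < x.1 n} := by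
  have : Continuous fun x : BallInfty => x.1 n :=
    (continuous_apply n).comp continuous_subtype_val
  exact isOpen_lt continuous_const this

lemma diamLe_eq (W : Set BallInfty) {δ : ℝ} (hδ : 0 ≤ δ) :
    {F : KB | linftyDiam (W ∩ F.1) ≤ δ} =
      ⋂ (p : ℕ × ℚ), ({F : KB | F.1 ⊆ (W ∩ {x | x.1 p.1 < (p.2 : ℝ)})ᶜ} ∪
        {F : KB | F.1 ⊆ (W ∩ {x | (p.2 : ℝ) + δ < x.1 p.1})ᶜ}) := by
  ext F
  simp only [Set.mem_setOf_eq, Set.mem_iInter, Set.mem_union]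
  rw [← not_iff_not, not_linftyDiam_le_iff hδ]
  push_neg
  constructor
  · rintro ⟨n, q, ⟨a, ⟨haW, haF⟩, ha⟩, ⟨b, ⟨hbW, hbF⟩, hb⟩⟩
    refine ⟨⟨n, q⟩, ?_, ?_⟩
    · exact fun h => (h haF) ⟨haW, ha⟩
    · exact fun h => (h hbF) ⟨hbW, hb⟩
  · rintro ⟨⟨n, q⟩, h1, h2⟩
    obtain ⟨a, haF, ha⟩ := Set.not_subset.1 h1
    obtain ⟨b, hbF, hb⟩ := Set.not_subset.1 h2
    rw [Set.notMem_compl_iff] at ha hb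
    exact ⟨n, q, ⟨a, ⟨ha.1, haF⟩, ha.2⟩, ⟨b, ⟨hb.1, hbF⟩, hb.2⟩⟩

lemma isGd_diamLe (W : Set BallInfty) (hW : IsOpen W) {δ : ℝ} (hδ : 0 ≤ δ) :
    IsGd {F : KB | linftyDiam (W ∩ F.1) ≤ δ} := by
  rw [diamLe_eq W hδ]
  exact isGd_iInter fun p => isGd_union
    (isGd_KB_subClosed (hW.inter (coordOpen p.1 p.2)).isClosed_compl)
    (isGd_KB_subClosed (hW.inter (coordOpen' p.1 ((p.2 : ℝ) + δ))).isClosed_compl)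

lemma isOpen_compl_diamLe (W : Set BallInfty) (hW : IsOpen W) {δ : ℝ} (hδ : 0 ≤ δ) :
    IsOpen {F : KB | linftyDiam (W ∩ F.1) ≤ δ}ᶜ := by
  rw [diamLe_eq W hδ]
  rw [Set.compl_iInter]
  refine isOpen_iUnion fun p => ?_
  rw [Set.compl_union]
  have e1 : {F : KB | F.1 ⊆ (W ∩ {x | x.1 p.1 < (p.2 : ℝ)})ᶜ}ᶜ =
      {F : KB | (F.1 ∩ (W ∩ {x | x.1 p.1 < (p.2 : ℝ)})).Nonempty} := by
    ext F
    simp only [Set.mem_compl_iff, Set.mem_setOf_eq, Set.not_subset]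
    constructor
    · rintro ⟨a, haF, ha⟩
      rw [not_not] at ha
      exact ⟨a, haF, ha⟩
    · rintro ⟨a, haF, ha⟩
      exact ⟨a, haF, by rwa [not_not]⟩
  have e2 : {F : KB | F.1 ⊆ (W ∩ {x | (p.2 : ℝ) + δ < x.1 p.1})ᶜ}ᶜ =
      {F : KB | (F.1 ∩ (W ∩ {x | (p.2 : ℝ) + δ < x.1 p.1})).Nonempty} := by
    ext F
    simp only [Set.mem_compl_iff, Set.mem_setOf_eq, Set.not_subset]
    constructor
    · rintro ⟨a, haF, ha⟩
      rw [not_not] at ha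
      exact ⟨a, haF, ha⟩
    · rintro ⟨a, haF, ha⟩
      exact ⟨a, haF, by rwa [not_not]⟩
  rw [e1, e2]
  exact (isOpen_KB_hits (hW.inter (coordOpen p.1 p.2))).inter
    (isOpen_KB_hits (hW.inter (coordOpen' p.1 ((p.2 : ℝ) + δ))))

end C

section D

lemma isCompact_szlenkD (ε : ℝ) (F : KB) : IsCompact (szlenkD ε F.1) := by
  have hO : IsOpen (⋃₀ {V : Set BallInfty | IsOpen V ∧ linftyDiam (V ∩ F.1) < ε}) :=
    isOpen_sUnion fun V hV => hV.1
  have heq : szlenkD ε F.1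
      = F.1 ∩ (⋃₀ {V : Set BallInfty | IsOpen V ∧ linftyDiam (V ∩ F.1) < ε})ᶜ := by
    ext x
    simp only [szlenkD, Set.mem_setOf_eq, Set.mem_inter_iff, Set.mem_compl_iff,
      Set.mem_sUnion, not_exists]
    constructor
    · rintro ⟨hxF, h⟩
      refine ⟨hxF, fun V hV => ?_⟩
      obtain ⟨⟨hVo, hVd⟩, hxV⟩ := hV
      exact absurd (h V hVo hxV) (not_le.2 hVd)
    · rintro ⟨hxF, h⟩
      refine ⟨hxF, fun V hVo hxV => ?_⟩
      by_contra hlt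
      exact h V ⟨⟨hVo, not_le.1 hlt⟩, hxV⟩
  rw [heq]
  exact F.2.inter_right hO.isClosed_compl

noncomputable def sMap (ε : ℝ) : KB → KB := fun F => ⟨szlenkD ε F.1, isCompact_szlenkD ε F⟩

end D

section E

variable (ε : ℝ) (e : ℕ → Set BallInfty)

/-- Rationals in `[0, ε)`. -/
abbrev Qe := {q : ℚ // 0 ≤ (q : ℝ) ∧ (q : ℝ) < ε}

lemma exists_Qe {d : ℝ} (hd0 : 0 ≤ d) (hd : d < ε) : ∃ q : Qe ε, d ≤ (q.1 : ℝ) := by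
  obtain ⟨q, hq1, hq2⟩ := exists_rat_btwn hd
  exact ⟨⟨q, le_trans hd0 hq1.le, hq2⟩, hq1.le⟩

lemma finite_subcover_small (heo : ∀ n, IsOpen (e n)) {F : KB} {C : Set BallInfty}
    (hC : IsClosed C) (P : ℕ → Prop)
    (hsub : ∀ x ∈ F.1 ∩ C, ∃ n, x ∈ e n ∧ P n) :
    ∃ t : Finset ℕ, (∀ n ∈ t, P n) ∧ F.1 ∩ C ⊆ ⋃ n ∈ t, e n := by
  have hK : IsCompact (F.1 ∩ C) := F.2.inter_right hC
  have hcov : F.1 ∩ C ⊆ ⋃ i : {n // P n}, e i.1 := by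
    intro x hx
    obtain ⟨n, hn, hPn⟩ := hsub x hx
    exact Set.mem_iUnion.2 ⟨⟨n, hPn⟩, hn⟩
  obtain ⟨t', ht'⟩ := hK.elim_finite_subcover (fun i : {n // P n} => e i.1)
    (fun i => heo i.1) hcov
  refine ⟨t'.image Subtype.val, ?_, ?_⟩
  · intro n hn
    obtain ⟨i, _, rfl⟩ := Finset.mem_image.1 hn
    exact i.2
  · intro x hx
    obtain ⟨i, hi⟩ := Set.mem_iUnion.1 (ht' hx)
    obtain ⟨hit, hxi⟩ := Set.mem_iUnion.1 hi
    exact Set.mem_biUnion (Finset.mem_image.2 ⟨i, hit, rfl⟩) hxi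

lemma not_mem_szlenkD_elim
    (heb : ∀ (x : BallInfty) (V : Set BallInfty), IsOpen V → x ∈ V → ∃ n, x ∈ e n ∧ e n ⊆ V)
    {F : KB} {x : BallInfty} (hxF : x ∈ F.1)
    (hx : x ∉ szlenkD ε F.1) : ∃ n, x ∈ e n ∧ linftyDiam (e n ∩ F.1) < ε := by
  have : ¬ ∀ U : Set BallInfty, IsOpen U → x ∈ U → ε ≤ linftyDiam (U ∩ F.1) := by
    intro h; exact hx ⟨hxF, h⟩
  push_neg at this
  obtain ⟨U, hUo, hxU, hUd⟩ := this
  obtain ⟨n, hxn, hnU⟩ := heb x U hUo hxU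
  exact ⟨n, hxn, lt_of_le_of_lt (linftyDiam_mono (Set.inter_subset_inter_left _ hnU)) hUd⟩

lemma isS3_T1 (heo : ∀ n, IsOpen (e n))
    (heb : ∀ (x : BallInfty) (V : Set BallInfty), IsOpen V → x ∈ V → ∃ n, x ∈ e n ∧ e n ⊆ V)
    {V : Set BallInfty} (hV : IsOpen V) :
    IsS3 {F : KB | szlenkD ε F.1 ⊆ V} := by
  classical
  have key : {F : KB | szlenkD ε F.1 ⊆ V} =
      ⋃ (t : Finset ℕ), ⋃ (c : {n // n ∈ t} → Qe ε),
        ({F : KB | F.1 ⊆ V ∪ ⋃ n ∈ t, e n} ∩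
          ⋂ (n : {n // n ∈ t}), {F : KB | linftyDiam (e n.1 ∩ F.1) ≤ ((c n).1 : ℝ)}) := by
    ext F
    simp only [Set.mem_setOf_eq, Set.mem_iUnion, Set.mem_inter_iff, Set.mem_iInter]
    constructor
    · intro h
      obtain ⟨t, htP, htcov⟩ := finite_subcover_small e heo (F := F) (C := Vᶜ)
        hV.isClosed_compl (fun n => linftyDiam (e n ∩ F.1) < ε) (by
          rintro x ⟨hxF, hxV⟩
          exact not_mem_szlenkD_elim ε e heb hxF (fun hs => hxV (h hs)))
      have hc : ∀ n : {n // n ∈ t}, ∃ q : Qe ε, linftyDiam (e n.1 ∩ F.1) ≤ (q.1 : ℝ) :=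
        fun n => exists_Qe ε (linftyDiam_nonneg _) (htP n.1 n.2)
      choose c hcq using hc
      refine ⟨t, c, ?_, fun n => hcq n⟩
      intro x hxF
      by_cases hxV : x ∈ V
      · exact Or.inl hxV
      · exact Or.inr (htcov ⟨hxF, hxV⟩)
    · rintro ⟨t, c, hcov, hsmall⟩ x hx
      rcases hcov hx.1 with hxV | hxe
      · exact hxV
      · exfalso
        obtain ⟨n, hnt, hxn⟩ := by simpa using hxe
        have h1 : ε ≤ linftyDiam (e n ∩ F.1) := hx.2 (e n) (heo n) hxn
        have h2 := hsmall ⟨n, hnt⟩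
        have := (c ⟨n, hnt⟩).2.2
        linarith
  rw [key]
  refine isS3_iUnion fun t => isS3_iUnion fun c => IsS3.of_isGd (isGd_inter ?_ ?_)
  · exact IsGd.of_isOpen (isOpen_KB_sub (hV.union (isOpen_biUnion fun n _ => heo n)))
  · exact isGd_iInter fun n => isGd_diamLe (e n.1) (heo n.1) (c n).2.1

lemma isGd_iUnion_finite {ι : Type*} [Finite ι] {S : ι → Set KB} (h : ∀ i, IsGd (S i)) :
    IsGd (⋃ i, S i) := by
  classical
  choose V hVo hVe using h
  have key : (⋃ i, S i) = ⋂ (f : ι → ℕ), ⋃ i, V i (f i) := by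
    ext x
    simp only [Set.mem_iUnion, Set.mem_iInter]
    constructor
    · rintro ⟨i, hi⟩ f
      rw [hVe i] at hi
      exact ⟨i, Set.mem_iInter.1 hi (f i)⟩
    · intro hf
      by_contra hx
      push_neg at hx
      have : ∀ i, ∃ m, x ∉ V i m := by
        intro i
        have := hx i
        rw [hVe i] at this
        simpa [Set.mem_iInter] using this
      choose f hfm using this
      obtain ⟨i, hi⟩ := hf f
      exact hfm i hi
  rw [key]
  exact isGd_iInter fun f => IsGd.of_isOpen (isOpen_iUnion fun i => hVo i (f i))

lemma compl_KB_sub_eq {O : Set BallInfty} :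
    {F : KB | F.1 ⊆ O}ᶜ = {F : KB | (F.1 ∩ Oᶜ).Nonempty} := by
  ext F
  simp only [Set.mem_compl_iff, Set.mem_setOf_eq, Set.not_subset]
  exact ⟨fun ⟨a, h1, h2⟩ => ⟨a, h1, h2⟩, fun ⟨a, h1, h2⟩ => ⟨a, h1, h2⟩⟩

lemma isGd_T2C (heo : ∀ n, IsOpen (e n))
    (heb : ∀ (x : BallInfty) (V : Set BallInfty), IsOpen V → x ∈ V → ∃ n, x ∈ e n ∧ e n ⊆ V)
    {C : Set BallInfty} (hC : IsClosed C) :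
    IsGd {F : KB | (szlenkD ε F.1 ∩ C).Nonempty} := by
  classical
  have key : {F : KB | (szlenkD ε F.1 ∩ C).Nonempty} =
      ⋂ (t : Finset ℕ),
        ({F : KB | F.1 ⊆ Cᶜ ∪ ⋃ n ∈ t, e n}ᶜ ∪
          ⋃ (n : {n // n ∈ t}), ⋂ (q : Qe ε),
            {F : KB | linftyDiam (e n.1 ∩ F.1) ≤ (q.1 : ℝ)}ᶜ) := by
    ext F
    simp only [Set.mem_setOf_eq, Set.mem_iInter, Set.mem_union, Set.mem_iUnion,
      Set.mem_compl_iff, Set.mem_iInter]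
    constructor
    · rintro ⟨x, hxs, hxC⟩ t
      by_cases hcov : F.1 ⊆ Cᶜ ∪ ⋃ n ∈ t, e n
      · right
        rcases hcov hxs.1 with hxc | hxe
        · exact absurd hxC hxc
        · obtain ⟨n, hnt, hxn⟩ := by simpa using hxe
          refine ⟨⟨n, hnt⟩, fun q => ?_⟩
          have h1 : ε ≤ linftyDiam (e n ∩ F.1) := hxs.2 (e n) (heo n) hxn
          have h2 := q.2.2
          simp only [Set.mem_setOf_eq]
          intro hle
          linarith
      · exact Or.inl hcov
    · intro h
      by_contra hne
      rw [Set.not_nonempty_iff_eq_empty] at hne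
      obtain ⟨t, htP, htcov⟩ := finite_subcover_small e heo (F := F) (C := C) hC
        (fun n => linftyDiam (e n ∩ F.1) < ε) (by
          rintro x ⟨hxF, hxC⟩
          refine not_mem_szlenkD_elim ε e heb hxF fun hs => ?_
          have : x ∈ szlenkD ε F.1 ∩ C := ⟨hs, hxC⟩
          rw [hne] at this
          exact this)
      rcases h t with hbad | ⟨n, hn⟩
      · apply hbad
        intro x hxF
        by_cases hxC : x ∈ C
        · exact Or.inr (htcov ⟨hxF, hxC⟩)
        · exact Or.inl hxC
      · obtain ⟨q, hq⟩ := exists_Qe ε (linftyDiam_nonneg _) (htP n.1 n.2)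
        exact hn q hq
  rw [key]
  refine isGd_iInter fun t => isGd_union ?_ (isGd_iUnion_finite fun n => ?_)
  · rw [compl_KB_sub_eq]
    rw [show ((Cᶜ ∪ ⋃ n ∈ t, e n)ᶜ : Set BallInfty) = C ∩ (⋃ n ∈ t, e n)ᶜ by
      rw [Set.compl_union, compl_compl]]
    exact isGd_KB_hitsClosed (hC.inter (isOpen_biUnion fun n _ => heo n).isClosed_compl)
  · exact isGd_iInter fun q => IsGd.of_isOpen (isOpen_compl_diamLe (e n.1) (heo n.1) q.2.1)

lemma isS3_T2 (heo : ∀ n, IsOpen (e n))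
    (heb : ∀ (x : BallInfty) (V : Set BallInfty), IsOpen V → x ∈ V → ∃ n, x ∈ e n ∧ e n ⊆ V)
    {V : Set BallInfty} (hV : IsOpen V) :
    IsS3 {F : KB | (szlenkD ε F.1 ∩ V).Nonempty} := by
  have key : {F : KB | (szlenkD ε F.1 ∩ V).Nonempty} =
      ⋃ (n : {n // closure (e n) ⊆ V}), {F : KB | (szlenkD ε F.1 ∩ closure (e n.1)).Nonempty} := by
    ext F
    simp only [Set.mem_setOf_eq, Set.mem_iUnion]
    constructor
    · rintro ⟨x, hxs, hxV⟩
      obtain ⟨r, hr, hball⟩ := Metric.isOpen_iff.1 hV x hxV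
      obtain ⟨n, hxn, hsub⟩ := heb x (Metric.ball x (r/2)) Metric.isOpen_ball
        (Metric.mem_ball_self (by linarith))
      have hcl : closure (e n) ⊆ V := by
        refine Set.Subset.trans (closure_mono hsub) ?_
        refine Set.Subset.trans Metric.closure_ball_subset_closedBall ?_
        exact Set.Subset.trans (Metric.closedBall_subset_ball (by linarith)) hball
      exact ⟨⟨n, hcl⟩, x, hxs, subset_closure hxn⟩
    · rintro ⟨n, x, hxs, hxcl⟩
      exact ⟨x, hxs, n.2 hxcl⟩
  rw [key]
  exact isS3_iUnion fun n => IsS3.of_isGd (isGd_T2C ε e heo heb isClosed_closure)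

end E

section F

variable (ε : ℝ) (e : ℕ → Set BallInfty)

def SB : Set (Set KB) :=
  (Set.range fun t : Finset ℕ => {F : KB | F.1 ⊆ ⋃ n ∈ t, e n}) ∪
  (Set.range fun n : ℕ => {F : KB | (F.1 ∩ e n).Nonempty})

lemma SB_countable : (SB e).Countable :=
  (Set.countable_range _).union (Set.countable_range _)

lemma SB_open (heo : ∀ n, IsOpen (e n)) : ∀ S ∈ SB e, IsOpen S := by
  rintro S (⟨t, rfl⟩ | ⟨n, rfl⟩)
  · exact isOpen_KB_sub (isOpen_biUnion fun n _ => heo n)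
  · exact isOpen_KB_hits (heo n)

lemma KB_top_eq (heo : ∀ n, IsOpen (e n))
    (heb : ∀ (x : BallInfty) (V : Set BallInfty), IsOpen V → x ∈ V → ∃ n, x ∈ e n ∧ e n ⊆ V) :
    (inferInstance : TopologicalSpace KB) = TopologicalSpace.generateFrom (SB e) := by
  apply le_antisymm
  · exact le_generateFrom (SB_open e heo)
  · show TopologicalSpace.generateFrom (SB e) ≤ TopologicalSpace.induced Subtype.val (vietoris BallInfty)
    rw [vietoris, induced_generateFrom_eq]
    apply TopologicalSpace.le_generateFrom_iff_subset_isOpen.2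
    rintro S ⟨T, hT, rfl⟩
    rcases hT with ⟨V, hVo, rfl⟩ | ⟨V, hVo, rfl⟩
    · -- preimage = {F | F.1 ⊆ V}
      have hpre : (Subtype.val ⁻¹' {K : Set BallInfty | K ⊆ V} : Set KB) = {F : KB | F.1 ⊆ V} := rfl
      change {F : KB | F.1 ⊆ V} ∈ {s | IsOpen[TopologicalSpace.generateFrom (SB e)] s}
      have key : {F : KB | F.1 ⊆ V} =
          ⋃ (t : {t : Finset ℕ // ∀ n ∈ t, e n ⊆ V}), {F : KB | F.1 ⊆ ⋃ n ∈ t.1, e n} := by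
        ext F
        simp only [Set.mem_setOf_eq, Set.mem_iUnion]
        constructor
        · intro h
          obtain ⟨t, htP, htcov⟩ := finite_subcover_small e heo (F := F) (C := Set.univ)
            isClosed_univ (fun n => e n ⊆ V) (by
              rintro x ⟨hxF, -⟩
              exact heb x V hVo (h hxF))
          refine ⟨⟨t, htP⟩, fun x hx => htcov ⟨hx, trivial⟩⟩
        · rintro ⟨t, ht⟩ x hx
          obtain ⟨n, hn⟩ := Set.mem_iUnion.1 (ht hx)
          obtain ⟨hnt, hxn⟩ := Set.mem_iUnion.1 hn
          exact t.2 n hnt hxn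
      rw [key, ← Set.sUnion_range]
      refine TopologicalSpace.GenerateOpen.sUnion _ ?_
      rintro _ ⟨t, rfl⟩
      exact TopologicalSpace.GenerateOpen.basic _ (Or.inl ⟨t.1, rfl⟩)
    · have hpre : (Subtype.val ⁻¹' {K : Set BallInfty | (K ∩ V).Nonempty} : Set KB)
          = {F : KB | (F.1 ∩ V).Nonempty} := rfl
      change {F : KB | (F.1 ∩ V).Nonempty} ∈ {s | IsOpen[TopologicalSpace.generateFrom (SB e)] s}
      have key : {F : KB | (F.1 ∩ V).Nonempty} =
          ⋃ (n : {n : ℕ // e n ⊆ V}), {F : KB | (F.1 ∩ e n.1).Nonempty} := by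
        ext F
        simp only [Set.mem_setOf_eq, Set.mem_iUnion]
        constructor
        · rintro ⟨x, hxF, hxV⟩
          obtain ⟨n, hxn, hnV⟩ := heb x V hVo hxV
          exact ⟨⟨n, hnV⟩, x, hxF, hxn⟩
        · rintro ⟨n, x, hxF, hxn⟩
          exact ⟨x, hxF, n.2 hxn⟩
      rw [key, ← Set.sUnion_range]
      refine TopologicalSpace.GenerateOpen.sUnion _ ?_
      rintro _ ⟨n, rfl⟩
      exact TopologicalSpace.GenerateOpen.basic _ (Or.inr ⟨n.1, rfl⟩)

lemma isS3_preimage (hε : 0 < ε) (heo : ∀ n, IsOpen (e n))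
    (heb : ∀ (x : BallInfty) (V : Set BallInfty), IsOpen V → x ∈ V → ∃ n, x ∈ e n ∧ e n ⊆ V)
    {U' : Set KB} (hU' : IsOpen U') : IsS3 (sMap ε ⁻¹' U') := by
  have hb := TopologicalSpace.isTopologicalBasis_of_subbasis (KB_top_eq e heo heb)
  have hbc : ((fun f : Set (Set KB) => ⋂₀ f) '' { f : Set (Set KB) | f.Finite ∧ f ⊆ SB e }).Countable :=
    (Set.countable_setOf_finite_subset (SB_countable e)).image _
  obtain ⟨S, hSsub, rfl⟩ := hb.open_eq_sUnion hU'
  have hSc : S.Countable := hbc.mono hSsub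
  rw [Set.preimage_sUnion, Set.biUnion_eq_iUnion]
  haveI := hSc.to_subtype
  refine isS3_iUnion ?_
  rintro ⟨A, hA⟩
  obtain ⟨f, ⟨hffin, hfsub⟩, rfl⟩ := hSsub hA
  rw [Set.preimage_sInter, ← Set.sInter_image]
  refine isS3_sInter_finite (hffin.image _) ?_
  rintro _ ⟨g, hg, rfl⟩
  rcases hfsub hg with ⟨t, rfl⟩ | ⟨n, rfl⟩
  · exact isS3_T1 ε e heo heb (isOpen_biUnion fun n _ => heo n)
  · exact isS3_T2 ε e heo heb (heo n)

end F
end Aux14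


/-- The Szlenk derivation map `s_ε : F ↦ F'_ε` on `K(B_{ℓ∞})` is `Σ⁰₃`-measurable: the
preimage of every Vietoris-open set is a countable union of countable intersections of
open sets. -/
theorem stmt14 (ε : ℝ) (hε : 0 < ε) :
    ∀ U : Set (Set BallInfty), IsOpen[vietoris BallInfty] U →
      ∃ V : ℕ → ℕ → Set KB, (∀ n m, IsOpen (V n m)) ∧
        {F : KB | szlenkD ε F.1 ∈ U} = ⋃ n, ⋂ m, V n m := by
  intro U hU
  obtain ⟨b, hbc, -, hbb⟩ := TopologicalSpace.exists_countable_basis BallInfty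
  obtain ⟨e, he⟩ := (hbc.insert ∅).exists_eq_range (Set.insert_nonempty _ _)
  have heo : ∀ n, IsOpen (e n) := by
    intro n
    have hmem : e n ∈ insert ∅ b := by rw [he]; exact Set.mem_range_self n
    rcases Set.mem_insert_iff.1 hmem with h | h
    · rw [h]; exact isOpen_empty
    · exact hbb.isOpen h
  have heb : ∀ (x : BallInfty) (V : Set BallInfty), IsOpen V → x ∈ V →
      ∃ n, x ∈ e n ∧ e n ⊆ V := by
    intro x V hVo hxV
    obtain ⟨v, hvb, hxv, hvV⟩ := hbb.exists_subset_of_mem_open hxV hVo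
    have hmem : v ∈ Set.range e := by rw [← he]; exact Set.mem_insert_of_mem _ hvb
    obtain ⟨n, rfl⟩ := hmem
    exact ⟨n, hxv, hvV⟩
  have hU' : IsOpen (Subtype.val ⁻¹' U : Set KB) :=
    (@isOpen_induced_iff _ _ (vietoris BallInfty) _ Subtype.val).2 ⟨U, hU, rfl⟩
  obtain ⟨V, hVo, hVe⟩ := Aux14.isS3_preimage ε e hε heo heb hU'
  exact ⟨V, hVo, hVe⟩
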